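/- Let $T: \mathbb{D} \to \mathrm{Mat}_N(\mathbb{C})$ be an analytic family of $N \times N$ matrices on a disk around $0$, with $T(\epsilon) = T_0 + \epsilon T_1 + O(\epsilon^2)$. Let $K = \ker T_0$ (right kernel) and $L = \ker T_0^t$ (left kernel), with $\dim K = \dim L = k$. If the bilinear form $L \times K \to \mathbb{C}$, $(\ell, v) \mapsto \ell^t T_1 v$, is nondegenerate, then $\det T(\epsilon)$ vanishes at $\epsilon = 0$ to order exactly $k$; equivalently $\mathrm{res}_{\epsilon=0}\, d\ln\det T(\epsilon) = k$. -/

import Mathlib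

attribute [local instance] Matrix.normedAddCommGroup Matrix.normedSpace

open scoped Topology
open Matrix

private lemma analyticAt_dslope_of_analyticAt {f : ℂ → ℂ} {z₀ : ℂ}
    (hf : AnalyticAt ℂ f z₀) : AnalyticAt ℂ (dslope f z₀) z₀ := by
  obtain ⟨p, hp⟩ := hf
  exact ⟨p.fslope, hp.has_fpower_series_dslope_fslope⟩

/-- Transversality criterion: for an analytic family `T(ε)` of `N × N`
matrices, if the right kernel `K` of `T(0)` and the left kernel `L` of `T(0)`
both have dimension `k` and the bilinear form `(ℓ, v) ↦ ℓᵗ T'(0) v` on `L × K`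
is nondegenerate, then `det T(ε)` vanishes to order exactly `k` at `ε = 0`. -/
theorem det_order_of_transversal_family {N k : ℕ}
    (T : ℂ → Matrix (Fin N) (Fin N) ℂ)
    (hT : AnalyticAt ℂ T 0)
    (hK : Module.finrank ℂ (LinearMap.ker (Matrix.mulVecLin (T 0))) = k)
    (hL : Module.finrank ℂ (LinearMap.ker (Matrix.mulVecLin (Matrix.transpose (T 0)))) = k)
    (hnondegL : ∀ ℓ ∈ LinearMap.ker (Matrix.mulVecLin (Matrix.transpose (T 0))),
      (∀ v ∈ LinearMap.ker (Matrix.mulVecLin (T 0)),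
        dotProduct ℓ (Matrix.mulVec (deriv T 0) v) = 0) → ℓ = 0)
    (hnondegK : ∀ v ∈ LinearMap.ker (Matrix.mulVecLin (T 0)),
      (∀ ℓ ∈ LinearMap.ker (Matrix.mulVecLin (Matrix.transpose (T 0))),
        dotProduct ℓ (Matrix.mulVec (deriv T 0) v) = 0) → v = 0) :
    ∃ u : ℂ → ℂ, AnalyticAt ℂ u 0 ∧ u 0 ≠ 0 ∧
      ∀ᶠ ε in 𝓝 (0 : ℂ), (T ε).det = ε ^ k * u ε := by
  classical
  set K : Submodule ℂ (Fin N → ℂ) := LinearMap.ker (Matrix.mulVecLin (T 0)) with hKdef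
  obtain ⟨W, hW⟩ := K.exists_isCompl
  have hNrank : Module.finrank ℂ (Fin N → ℂ) = N := Module.finrank_fin_fun ℂ
  have hkN : k ≤ N := by
    have h1 := K.finrank_le
    omega
  have hWrank : Module.finrank ℂ W = N - k := by
    have h := Submodule.finrank_add_eq_of_isCompl hW
    rw [hNrank, hK] at h
    omega
  let bK : Module.Basis (Fin k) ℂ K := Module.finBasisOfFinrankEq ℂ K hK
  let bW : Module.Basis (Fin (N - k)) ℂ W := Module.finBasisOfFinrankEq ℂ W hWrank
  let e : (Fin k ⊕ Fin (N - k)) ≃ Fin N := finSumFinEquiv.trans (finCongr (by omega))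
  let q : Fin k ⊕ Fin (N - k) → (Fin N → ℂ) :=
    Sum.elim (fun a => (bK a : Fin N → ℂ)) (fun c => (bW c : Fin N → ℂ))
  let b : Module.Basis (Fin N) ℂ (Fin N → ℂ) :=
    (((bK.prod bW).map (Submodule.prodEquivOfIsCompl K W hW)).reindex e)
  have hbq : ∀ s, b (e s) = q s := by
    intro s
    rw [show b (e s) = ((bK.prod bW).map (Submodule.prodEquivOfIsCompl K W hW)) (e.symm (e s))
        from Module.Basis.reindex_apply _ _ _, Equiv.symm_apply_apply, Module.Basis.map_apply]
    cases s with
    | inl a =>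
      rw [Submodule.coe_prodEquivOfIsCompl', Module.Basis.prod_apply_inl_fst, Module.Basis.prod_apply_inl_snd]
      simp [q]
    | inr c =>
      rw [Submodule.coe_prodEquivOfIsCompl', Module.Basis.prod_apply_inr_fst, Module.Basis.prod_apply_inr_snd]
      simp [q]
  -- the change-of-basis matrix
  let Q : Matrix (Fin N) (Fin N) ℂ := (Pi.basisFun ℂ (Fin N)).toMatrix b
  have hQ : ∀ i j, Q i j = b j i := by
    intro i j
    simp [Q, Module.Basis.toMatrix_apply]
  haveI : Invertible Q := (Pi.basisFun ℂ (Fin N)).invertibleToMatrix b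
  have hQdet : Q.det ≠ 0 := (Matrix.isUnit_det_of_invertible Q).ne_zero
  -- analyticity and derivative of entries of `T ε *ᵥ w`
  have hmv : ∀ (w : Fin N → ℂ) (i : Fin N),
      AnalyticAt ℂ (fun z => (T z *ᵥ w) i) 0 ∧
      deriv (fun z => (T z *ᵥ w) i) 0 = ((deriv T 0) *ᵥ w) i := by
    intro w i
    let Lm : Matrix (Fin N) (Fin N) ℂ →ₗ[ℂ] ℂ :=
      { toFun := fun M => (M *ᵥ w) i
        map_add' := fun A B => by simp [Matrix.add_mulVec]
        map_smul' := fun c A => by simp [Matrix.smul_mulVec] }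
    let L : Matrix (Fin N) (Fin N) ℂ →L[ℂ] ℂ := LinearMap.toContinuousLinearMap Lm
    have h1 : AnalyticAt ℂ (fun z => (T z *ᵥ w) i) 0 := (L.analyticAt (T 0)).comp hT
    have h2 : HasDerivAt (fun z => (T z *ᵥ w) i) (((deriv T 0) *ᵥ w) i) 0 :=
      (L.hasFDerivAt.comp_hasDerivAt 0 hT.differentiableAt.hasDerivAt)
    exact ⟨h1, h2.deriv⟩
  have hTq : ∀ a : Fin k, T 0 *ᵥ (bK a : Fin N → ℂ) = 0 := by
    intro a
    have h : Matrix.mulVecLin (T 0) ((bK a : Fin N → ℂ)) = 0 := LinearMap.mem_ker.mp (bK a).2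
    rwa [Matrix.mulVecLin_apply] at h
  -- the regularized column matrix
  let C : ℂ → Matrix (Fin N) (Fin N) ℂ := fun ε => Matrix.of fun i j =>
    Sum.elim (fun a => dslope (fun z => (T z *ᵥ (bK a : Fin N → ℂ)) i) 0 ε)
             (fun c => (T ε *ᵥ (bW c : Fin N → ℂ)) i) (e.symm j)
  let vs : ℂ → Fin N → ℂ := fun ε j => Sum.elim (fun _ => ε) (fun _ => (1 : ℂ)) (e.symm j)
  -- key factorization
  have hfact : ∀ ε, T ε * Q = Matrix.of fun i j => vs ε j * C ε i j := by
    intro ε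
    ext i j
    have hcol : (T ε * Q) i j = (T ε *ᵥ b j) i := by
      simp [Matrix.mul_apply, Matrix.mulVec, dotProduct, hQ]
    rw [Matrix.of_apply, hcol]
    obtain ⟨s, rfl⟩ := e.surjective j
    rw [hbq]
    cases s with
    | inl a =>
      simp only [C, vs, Matrix.of_apply, Equiv.symm_apply_apply, Sum.elim_inl, q]
      have h := sub_smul_dslope (fun z => (T z *ᵥ (bK a : Fin N → ℂ)) i) 0 ε
      simp only [sub_zero, smul_eq_mul] at h
      have h0 : (T 0 *ᵥ (bK a : Fin N → ℂ)) i = 0 := by rw [hTq a]; rfl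
      rw [h, h0, sub_zero]
    | inr c =>
      simp only [C, vs, Matrix.of_apply, Equiv.symm_apply_apply, Sum.elim_inr, q, one_mul]
  have hprod : ∀ ε, (∏ j, vs ε j) = ε ^ k := by
    intro ε
    rw [Fintype.prod_equiv e.symm (vs ε)
      (Sum.elim (fun _ : Fin k => ε) (fun _ : Fin (N - k) => (1 : ℂ))) (fun j => rfl),
      Fintype.prod_sum_type]
    simp
  have hdet : ∀ ε, (T ε).det * Q.det = ε ^ k * (C ε).det := by
    intro ε
    rw [← Matrix.det_mul, hfact ε, Matrix.det_mul_row, hprod]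
  -- analyticity of `det (C ε)`
  have hCent : ∀ i j, AnalyticAt ℂ (fun ε => C ε i j) 0 := by
    intro i j
    rcases h : e.symm j with a | c
    · have he : (fun ε => C ε i j) = dslope (fun z => (T z *ᵥ (bK a : Fin N → ℂ)) i) 0 := by
        funext ε; simp [C, h]
      rw [he]
      exact analyticAt_dslope_of_analyticAt (hmv _ i).1
    · have he : (fun ε => C ε i j) = fun ε => (T ε *ᵥ (bW c : Fin N → ℂ)) i := by
        funext ε; simp [C, h]
      rw [he]
      exact (hmv _ i).1
  have hCdet : AnalyticAt ℂ (fun ε => (C ε).det) 0 := by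
    simp only [Matrix.det_apply']
    exact Finset.analyticAt_fun_sum _ fun σ _ =>
      analyticAt_const.mul (Finset.analyticAt_fun_prod _ fun i _ => hCent (σ i) i)
  -- nonvanishing of `det (C 0)`
  have hC0 : (C 0).det ≠ 0 := by
    intro h0
    obtain ⟨x, hx0, hx⟩ := Matrix.exists_mulVec_eq_zero_iff.2 h0
    set w2 : Fin N → ℂ := ∑ a, x (e (Sum.inl a)) • (bK a : Fin N → ℂ) with hw2def
    set w1 : Fin N → ℂ := ∑ c, x (e (Sum.inr c)) • (bW c : Fin N → ℂ) with hw1def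
    have hsum : ∀ (M : Matrix (Fin N) (Fin N) ℂ) {n : ℕ} (y : Fin n → ℂ)
        (v : Fin n → (Fin N → ℂ)) (i : Fin N),
        (M *ᵥ (∑ a, y a • v a)) i = ∑ a, y a * (M *ᵥ v a) i := by
      intro M n y v i
      rw [← Matrix.mulVecLin_apply, map_sum]
      simp [Matrix.mulVecLin_apply, Finset.sum_apply]
    have hC0x : C 0 *ᵥ x = (deriv T 0) *ᵥ w2 + T 0 *ᵥ w1 := by
      funext i
      have h1 : (C 0 *ᵥ x) i = ∑ j, C 0 i j * x j := rfl
      rw [h1, Fintype.sum_equiv e.symm (fun j => C 0 i j * x j)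
        (fun s => C 0 i (e s) * x (e s)) (fun j => by simp),
        Fintype.sum_sum_type]
      have hinl : ∀ a : Fin k, C 0 i (e (Sum.inl a)) = ((deriv T 0) *ᵥ (bK a : Fin N → ℂ)) i := by
        intro a
        simp only [C, Matrix.of_apply, Equiv.symm_apply_apply, Sum.elim_inl]
        rw [dslope_same]
        exact (hmv _ i).2
      have hinr : ∀ c, C 0 i (e (Sum.inr c)) = (T 0 *ᵥ (bW c : Fin N → ℂ)) i := by
        intro c
        simp only [C, Matrix.of_apply, Equiv.symm_apply_apply, Sum.elim_inr]
      simp only [hinl, hinr]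
      rw [Pi.add_apply, hw2def, hw1def, hsum, hsum]
      congr 1 <;> exact Finset.sum_congr rfl fun _ _ => by ring
    have hw2mem : w2 ∈ K := by
      apply Submodule.sum_mem
      intro a _
      exact Submodule.smul_mem _ _ (bK a).2
    have hw1mem : w1 ∈ W := by
      apply Submodule.sum_mem
      intro c _
      exact Submodule.smul_mem _ _ (bW c).2
    have hpair : ∀ ℓ ∈ LinearMap.ker (Matrix.mulVecLin (Matrix.transpose (T 0))),
        dotProduct ℓ (Matrix.mulVec (deriv T 0) w2) = 0 := by
      intro ℓ hℓ
      have h1 : dotProduct ℓ (C 0 *ᵥ x) = 0 := by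
        rw [hx, dotProduct_zero]
      have h2 : dotProduct ℓ (T 0 *ᵥ w1) = 0 := by
        rw [Matrix.dotProduct_mulVec]
        have hℓ0 : ℓ ᵥ* T 0 = 0 := by
          rw [LinearMap.mem_ker, Matrix.mulVecLin_apply, Matrix.mulVec_transpose] at hℓ
          exact hℓ
        rw [hℓ0, zero_dotProduct]
      rw [hC0x, dotProduct_add, h2, add_zero] at h1
      exact h1
    have hw2 : w2 = 0 := hnondegK w2 hw2mem hpair
    have hcoef2 : ∀ a, x (e (Sum.inl a)) = 0 := by
      have hz : (∑ a, x (e (Sum.inl a)) • bK a) = (0 : K) := by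
        apply Subtype.coe_injective
        push_cast
        rw [← hw2def, hw2]
      exact fun a => Fintype.linearIndependent_iff.mp bK.linearIndependent _ hz a
    have hw1K : w1 ∈ K := by
      have : T 0 *ᵥ w1 = 0 := by
        have := hx
        rw [hC0x, hw2, Matrix.mulVec_zero, zero_add] at this
        exact this
      rw [hKdef, LinearMap.mem_ker, Matrix.mulVecLin_apply]
      exact this
    have hw1 : w1 = 0 := Submodule.disjoint_def.mp hW.disjoint w1 hw1K hw1mem
    have hcoef1 : ∀ c, x (e (Sum.inr c)) = 0 := by
      have hz : (∑ c, x (e (Sum.inr c)) • bW c) = (0 : W) := by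
        apply Subtype.coe_injective
        push_cast
        rw [← hw1def, hw1]
      exact fun c => Fintype.linearIndependent_iff.mp bW.linearIndependent _ hz c
    apply hx0
    funext j
    obtain ⟨s, rfl⟩ := e.surjective j
    cases s with
    | inl a => exact hcoef2 a
    | inr c => exact hcoef1 c
  refine ⟨fun ε => (C ε).det * Q.det⁻¹, hCdet.mul analyticAt_const,
    mul_ne_zero hC0 (inv_ne_zero hQdet), ?_⟩
  refine Filter.Eventually.of_forall fun ε => ?_
  have h := hdet ε
  have h2 := (eq_div_iff hQdet).mpr h
  rw [h2, div_eq_mul_inv]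
  ring
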